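/- Let μ > 1 and let (g_n) be a nondecreasing sequence with g_1 = 1/μ, g_n → 1 and (1 − g_n)·ln(n) → 0. Then for every α < 1, the quantity f(α,n) = (2/n)·Σ_{k=1}^{⌊n/2⌋} (−1 + n^{α(2g_n − g_k − g_{n−k})}) tends to 0 as n → ∞. -/

import Mathlib

open Filter

private lemma abs_exp_sub_one_le_aux (x : ℝ) : |Real.exp x - 1| ≤ Real.exp |x| - 1 := by
  rcases abs_cases x with ⟨h1, h2⟩ | ⟨h1, h2⟩
  · rw [h1, abs_of_nonneg (by linarith [Real.one_le_exp h2])]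
  · rw [h1, abs_of_nonpos (by linarith [Real.exp_le_one_iff.mpr (by linarith : x ≤ 0)])]
    have h := Real.one_le_cosh x
    rw [Real.cosh_eq] at h
    linarith

set_option maxHeartbeats 2000000 in
/-- Let `μ > 1` and `(g n)` nondecreasing with `g 1 = 1/μ`, `g n → 1` and
`(1 − g n)·log n → 0`. Then for every `α < 1` the quantity
`f(α,n) = (2/n)·Σ_{k=1}^{⌊n/2⌋} (−1 + n^(α(2 g n − g k − g (n−k))))` tends to `0`. -/
theorem second_moment_error_tendsto_zero
    (μ : ℝ) (hμ : 1 < μ)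
    (g : ℕ → ℝ) (hmono : Monotone g) (hg1 : g 1 = 1 / μ)
    (hglim : Tendsto g atTop (nhds 1))
    (hglog : Tendsto (fun n : ℕ => (1 - g n) * Real.log n) atTop (nhds 0)) :
    ∀ α : ℝ, α < 1 →
      Tendsto (fun n : ℕ =>
          (2 / (n : ℝ)) * ∑ k ∈ Finset.Icc 1 (n / 2),
            (-1 + (n : ℝ) ^ (α * (2 * g n - g k - g (n - k)))))
        atTop (nhds 0) := by
  have hg_le1 : ∀ i, g i ≤ 1 := hmono.ge_of_tendsto hglim
  have hμ0 : 0 < μ := lt_trans one_pos hμ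
  have hinv : 0 < 1 - 1/μ := by
    have : 1/μ < 1 := by rw [div_lt_one hμ0]; exact hμ
    linarith
  have hinv1 : 1 - 1/μ < 1 := by
    have : 0 < 1/μ := by positivity
    linarith
  intro α hα
  set αp : ℝ := max α 0 with hαp_def
  have hαp0 : 0 ≤ αp := le_max_right _ _
  have hαp1 : αp < 1 := max_lt hα one_pos
  have hαle : α ≤ αp := le_max_left _ _
  set β : ℝ := αp * (1 - 1/μ) with hβ_def
  have hβ0 : 0 ≤ β := mul_nonneg hαp0 hinv.le
  have hβ1 : β < 1 := by nlinarith
  set θ : ℝ := (1 - β)/2 with hθ_def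
  have hθ0 : 0 < θ := by simp only [hθ_def]; linarith
  have hθ1 : θ < 1 := by simp only [hθ_def]; linarith
  have hθβ : θ + β < 1 := by simp only [hθ_def]; linarith
  set K : ℕ → ℕ := fun n => ⌈(n:ℝ)^θ⌉₊ with hK_def
  set m : ℕ → ℕ := fun n => n - n/2 with hm_def
  -- K tends to infinity
  have hKtop : Tendsto K atTop atTop := by
    have h1 : Tendsto (fun n : ℕ => ((n:ℝ))^θ) atTop atTop :=
      (tendsto_rpow_atTop hθ0).comp tendsto_natCast_atTop_atTop
    rw [tendsto_atTop]
    intro b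
    filter_upwards [h1.eventually_ge_atTop (b:ℝ)] with n hn
    have : (b:ℝ) ≤ (K n : ℝ) := le_trans hn (Nat.le_ceil _)
    exact_mod_cast this
  have hmtop : Tendsto m atTop atTop := by
    rw [tendsto_atTop]
    intro b
    filter_upwards [eventually_ge_atTop (2*b)] with n hn
    simp only [hm_def]
    omega
  -- basic tendsto facts
  have T1 : Tendsto (fun n : ℕ => 1 - g n) atTop (nhds 0) := by
    have := hglim.const_sub 1
    simpa using this
  -- (1 - g (K n)) * log n → 0
  have TK : Tendsto (fun n : ℕ => (1 - g (K n)) * Real.log n) atTop (nhds 0) := by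
    have h3 : Tendsto (fun n : ℕ => (1 - g (K n)) * Real.log (K n)) atTop (nhds 0) :=
      hglog.comp hKtop
    have h4 : Tendsto (fun n : ℕ => (1/θ) * ((1 - g (K n)) * Real.log (K n))) atTop (nhds 0) := by
      simpa using h3.const_mul (1/θ)
    apply squeeze_zero' ?_ ?_ h4
    · filter_upwards [eventually_ge_atTop 1] with n hn
      have hn1 : (1:ℝ) ≤ n := by exact_mod_cast hn
      exact mul_nonneg (by linarith [hg_le1 (K n)]) (Real.log_nonneg hn1)
    · filter_upwards [eventually_ge_atTop 1] with n hn
      have hn1 : (1:ℝ) ≤ n := by exact_mod_cast hn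
      have hn0 : (0:ℝ) < n := by linarith
      have hKn : (n:ℝ)^θ ≤ (K n : ℝ) := Nat.le_ceil _
      have hlog : θ * Real.log n ≤ Real.log (K n) := by
        calc θ * Real.log n = Real.log ((n:ℝ)^θ) := (Real.log_rpow hn0 _).symm
          _ ≤ Real.log (K n) := Real.log_le_log (Real.rpow_pos_of_pos hn0 _) hKn
      have hgK : 0 ≤ 1 - g (K n) := by linarith [hg_le1 (K n)]
      have h5 := mul_le_mul_of_nonneg_left hlog hgK
      calc (1 - g (K n)) * Real.log n
          = (1/θ) * ((1 - g (K n)) * (θ * Real.log n)) := by field_simp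
        _ ≤ (1/θ) * ((1 - g (K n)) * Real.log (K n)) := by
            apply mul_le_mul_of_nonneg_left h5 (by positivity)
  -- (1 - g (m n)) * log n → 0
  have Tm : Tendsto (fun n : ℕ => (1 - g (m n)) * Real.log n) atTop (nhds 0) := by
    have h3 : Tendsto (fun n : ℕ =>
        (1 - g (m n)) * Real.log (m n) + (1 - g (m n)) * Real.log 2) atTop (nhds 0) := by
      have ha := hglog.comp hmtop
      have hb := (T1.comp hmtop).mul_const (Real.log 2)
      simpa using ha.add hb
    apply squeeze_zero' ?_ ?_ h3
    · filter_upwards [eventually_ge_atTop 1] with n hn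
      have hn1 : (1:ℝ) ≤ n := by exact_mod_cast hn
      exact mul_nonneg (by linarith [hg_le1 (m n)]) (Real.log_nonneg hn1)
    · filter_upwards [eventually_ge_atTop 1] with n hn
      have hm1 : 1 ≤ m n := by simp only [hm_def]; omega
      have hle : n ≤ 2 * m n := by simp only [hm_def]; omega
      have hm0 : (0:ℝ) < (m n : ℝ) := by exact_mod_cast hm1
      have hlogle : Real.log n ≤ Real.log (m n) + Real.log 2 := by
        have h0 : Real.log n ≤ Real.log (2 * (m n : ℝ)) := by
          apply Real.log_le_log (by exact_mod_cast hn)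
          exact_mod_cast hle
        rw [Real.log_mul (by norm_num) (ne_of_gt hm0)] at h0
        linarith
      have hgm : 0 ≤ 1 - g (m n) := by linarith [hg_le1 (m n)]
      nlinarith [mul_le_mul_of_nonneg_left hlogle hgm]
  -- E n := exp(2|α|(1-g(K n)) log n) - 1 → 0
  have TE : Tendsto (fun n : ℕ =>
      Real.exp (2 * |α| * ((1 - g (K n)) * Real.log n)) - 1) atTop (nhds 0) := by
    have h1 : Tendsto (fun n : ℕ => 2 * |α| * ((1 - g (K n)) * Real.log n)) atTop (nhds 0) := by
      simpa using TK.const_mul (2 * |α|)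
    have h2 := (Real.continuous_exp.tendsto 0).comp h1
    simp only [Real.exp_zero] at h2
    simpa using h2.sub_const 1
  -- D n := exp(αp (1 - g (m n)) log n) → 1
  have TD : Tendsto (fun n : ℕ =>
      Real.exp (αp * ((1 - g (m n)) * Real.log n))) atTop (nhds 1) := by
    have h1 : Tendsto (fun n : ℕ => αp * ((1 - g (m n)) * Real.log n)) atTop (nhds 0) := by
      simpa using Tm.const_mul αp
    have h2 := (Real.continuous_exp.tendsto 0).comp h1
    simpa [Real.exp_zero, Function.comp_def] using h2
  -- K n / n → 0 and K n * n^(β-1) → 0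
  have hKle : ∀ n : ℕ, 1 ≤ n → (K n : ℝ) ≤ 2 * (n:ℝ)^θ := by
    intro n hn
    have hn1 : (1:ℝ) ≤ n := by exact_mod_cast hn
    have h1 : (1:ℝ) ≤ (n:ℝ)^θ := by
      calc (1:ℝ) = (1:ℝ)^θ := (Real.one_rpow θ).symm
        _ ≤ (n:ℝ)^θ := Real.rpow_le_rpow (by norm_num) hn1 hθ0.le
    have h2 : (K n : ℝ) < (n:ℝ)^θ + 1 := Nat.ceil_lt_add_one (by positivity)
    linarith
  have hKdiv : Tendsto (fun n : ℕ => (K n : ℝ) / n) atTop (nhds 0) := by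
    have hb : Tendsto (fun n : ℕ => 2 * (n:ℝ)^(-(1-θ))) atTop (nhds 0) := by
      have := (tendsto_rpow_neg_atTop (by linarith : (0:ℝ) < 1 - θ)).comp
        (tendsto_natCast_atTop_atTop (R := ℝ))
      simpa using this.const_mul 2
    apply squeeze_zero' ?_ ?_ hb
    · filter_upwards [eventually_ge_atTop 1] with n hn
      positivity
    · filter_upwards [eventually_ge_atTop 1] with n hn
      have hn1 : (1:ℝ) ≤ n := by exact_mod_cast hn
      have hn0 : (0:ℝ) < n := by linarith
      have h1 := hKle n hn
      have h2 : (n:ℝ)^(-(1-θ)) = (n:ℝ)^θ / n := by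
        rw [show -(1-θ) = θ - 1 by ring, Real.rpow_sub hn0, Real.rpow_one]
      rw [h2, ← mul_div_assoc]
      gcongr
  have hKβ : Tendsto (fun n : ℕ => (K n : ℝ) * (n:ℝ)^(β-1)) atTop (nhds 0) := by
    have hb : Tendsto (fun n : ℕ => 2 * (n:ℝ)^(-(1-θ-β))) atTop (nhds 0) := by
      have := (tendsto_rpow_neg_atTop (by linarith : (0:ℝ) < 1 - θ - β)).comp
        (tendsto_natCast_atTop_atTop (R := ℝ))
      simpa using this.const_mul 2
    apply squeeze_zero' ?_ ?_ hb
    · filter_upwards [eventually_ge_atTop 1] with n hn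
      positivity
    · filter_upwards [eventually_ge_atTop 1] with n hn
      have hn1 : (1:ℝ) ≤ n := by exact_mod_cast hn
      have hn0 : (0:ℝ) < n := by linarith
      have h1 := hKle n hn
      have h2 : (n:ℝ)^(-(1-θ-β)) = (n:ℝ)^θ * (n:ℝ)^(β-1) := by
        rw [← Real.rpow_add hn0]; ring_nf
      rw [h2]
      have h3 : (0:ℝ) ≤ (n:ℝ)^(β-1) := by positivity
      nlinarith
  -- the bound function
  set B : ℕ → ℝ := fun n =>
    2 * ((K n : ℝ) / n) +
    2 * ((K n : ℝ) * (n:ℝ)^(β-1)) * Real.exp (αp * ((1 - g (m n)) * Real.log n)) +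
    (Real.exp (2 * |α| * ((1 - g (K n)) * Real.log n)) - 1) with hB_def
  have TB : Tendsto B atTop (nhds 0) := by
    have := ((hKdiv.const_mul 2).add ((hKβ.const_mul 2).mul TD)).add TE
    simpa using this
  clear_value αp β θ K m B
  apply squeeze_zero_norm' ?_ TB
  filter_upwards [eventually_ge_atTop 1] with n hn
  clear T1 TK Tm TE TD hKdiv hKβ hKtop hmtop hKle TB hglog hglim
  have hn1 : (1:ℝ) ≤ n := by exact_mod_cast hn
  have hn0 : (0:ℝ) < n := by linarith
  have hlog0 : 0 ≤ Real.log n := Real.log_nonneg hn1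
  set N := n / 2 with hN_def
  set j := min (K n) N with hj_def
  set D : ℝ := Real.exp (αp * ((1 - g (m n)) * Real.log n)) with hD_def
  set E : ℝ := Real.exp (2 * |α| * ((1 - g (K n)) * Real.log n)) - 1 with hE_def
  have hD0 : 0 < D := Real.exp_pos _
  have hE0 : 0 ≤ E := by
    have : (1:ℝ) ≤ Real.exp (2 * |α| * ((1 - g (K n)) * Real.log n)) := by
      apply Real.one_le_exp
      have h1 := hg_le1 (K n)
      exact mul_nonneg (by positivity) (mul_nonneg (by linarith) hlog0)
    simp only [hE_def]; linarith
  clear_value D E N j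
  -- split the sum
  have hsplit : ∑ k ∈ Finset.Icc 1 N, (-1 + (n : ℝ) ^ (α * (2 * g n - g k - g (n - k))))
      = (∑ k ∈ Finset.Ioc 0 j, (-1 + (n : ℝ) ^ (α * (2 * g n - g k - g (n - k)))))
      + ∑ k ∈ Finset.Ioc j N, (-1 + (n : ℝ) ^ (α * (2 * g n - g k - g (n - k)))) := by
    rw [show Finset.Icc 1 N = Finset.Ioc 0 N from Finset.Icc_add_one_left_eq_Ioc 0 N]
    exact (Finset.sum_Ioc_consecutive _ (Nat.zero_le j) (by omega : j ≤ N)).symm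
  -- bound on small-k terms
  have hsmall : ∀ k ∈ Finset.Ioc 0 j,
      |(-1 + (n : ℝ) ^ (α * (2 * g n - g k - g (n - k))))| ≤ 1 + (n:ℝ)^β * D := by
    intro k hk
    rw [Finset.mem_Ioc] at hk
    obtain ⟨hk0, hkj⟩ := hk
    have hk1 : 1 ≤ k := hk0
    have hkN : k ≤ N := by omega
    have hkn : k ≤ n := by omega
    have hmnk : m n ≤ n - k := by simp only [hm_def]; omega
    have hb0 : 0 ≤ 2 * g n - g k - g (n - k) := by
      have h1 : g k ≤ g n := hmono hkn
      have h2 : g (n - k) ≤ g n := hmono (by omega)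
      linarith
    have hbk : 2 * g n - g k - g (n - k) ≤ (1 - 1/μ) + (1 - g (m n)) := by
      have h1 : g n ≤ 1 := hg_le1 n
      have h2 : 1/μ ≤ g k := hg1 ▸ hmono hk1
      have h3 : g (m n) ≤ g (n - k) := hmono hmnk
      linarith
    have he : α * (2 * g n - g k - g (n - k)) ≤ β + αp * (1 - g (m n)) := by
      have h1 : α * (2 * g n - g k - g (n - k)) ≤ αp * (2 * g n - g k - g (n - k)) :=
        mul_le_mul_of_nonneg_right hαle hb0
      have h2 : αp * (2 * g n - g k - g (n - k)) ≤ αp * ((1 - 1/μ) + (1 - g (m n))) :=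
        mul_le_mul_of_nonneg_left hbk hαp0
      have h3 : αp * ((1 - 1/μ) + (1 - g (m n))) = β + αp * (1 - g (m n)) := by
        rw [hβ_def]; ring
      linarith
    have hrpow : (n:ℝ) ^ (α * (2 * g n - g k - g (n - k))) ≤ (n:ℝ)^β * D := by
      calc (n:ℝ) ^ (α * (2 * g n - g k - g (n - k)))
          ≤ (n:ℝ) ^ (β + αp * (1 - g (m n))) := Real.rpow_le_rpow_of_exponent_le hn1 he
        _ = (n:ℝ)^β * (n:ℝ)^(αp * (1 - g (m n))) := Real.rpow_add hn0 _ _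
        _ = (n:ℝ)^β * D := by
            have harg : Real.log (n:ℝ) * (αp * (1 - g (m n)))
                = αp * ((1 - g (m n)) * Real.log (n:ℝ)) := by ring
            rw [hD_def, Real.rpow_def_of_pos hn0 (αp * (1 - g (m n))), harg]
    have hx0 : (0:ℝ) ≤ (n:ℝ) ^ (α * (2 * g n - g k - g (n - k))) :=
      Real.rpow_nonneg hn0.le _
    rw [abs_le]
    constructor
    · have h9 : (0:ℝ) ≤ (n:ℝ)^β * D := mul_nonneg (Real.rpow_nonneg hn0.le _) hD0.le
      linarith
    · linarith
  -- bound on large-k terms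
  have hlarge : ∀ k ∈ Finset.Ioc j N,
      |(-1 + (n : ℝ) ^ (α * (2 * g n - g k - g (n - k))))| ≤ E := by
    intro k hk
    rw [Finset.mem_Ioc] at hk
    obtain ⟨hkj, hkN⟩ := hk
    have hKk : K n ≤ k := by omega
    have hKnk : K n ≤ n - k := by omega
    have hkn : k ≤ n := by omega
    have hb0 : 0 ≤ 2 * g n - g k - g (n - k) := by
      have h1 : g k ≤ g n := hmono hkn
      have h2 : g (n - k) ≤ g n := hmono (by omega)
      linarith
    have hbk : 2 * g n - g k - g (n - k) ≤ 2 * (1 - g (K n)) := by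
      have h1 : g (K n) ≤ g k := hmono hKk
      have h2 : g (K n) ≤ g (n - k) := hmono hKnk
      have h3 : g n ≤ 1 := hg_le1 n
      linarith
    have habs : |Real.log n * (α * (2 * g n - g k - g (n - k)))|
        ≤ 2 * |α| * ((1 - g (K n)) * Real.log n) := by
      rw [abs_mul, abs_mul, abs_of_nonneg hlog0, abs_of_nonneg hb0]
      calc Real.log n * (|α| * (2 * g n - g k - g (n - k)))
          ≤ Real.log n * (|α| * (2 * (1 - g (K n)))) :=
            mul_le_mul_of_nonneg_left
              (mul_le_mul_of_nonneg_left hbk (abs_nonneg α)) hlog0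
        _ = 2 * |α| * ((1 - g (K n)) * Real.log n) := by ring
    calc |(-1 + (n : ℝ) ^ (α * (2 * g n - g k - g (n - k))))|
        = |Real.exp (Real.log n * (α * (2 * g n - g k - g (n - k)))) - 1| := by
          rw [Real.rpow_def_of_pos hn0]; ring_nf
      _ ≤ Real.exp (|Real.log n * (α * (2 * g n - g k - g (n - k)))|) - 1 :=
          abs_exp_sub_one_le_aux _
      _ ≤ E := by
          simp only [hE_def]
          have := Real.exp_le_exp.mpr habs
          linarith
  -- assemble
  rw [Real.norm_eq_abs, abs_mul, abs_of_nonneg (by positivity : (0:ℝ) ≤ 2 / (n:ℝ)), hsplit]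
  have hA1 : |∑ k ∈ Finset.Ioc 0 j, (-1 + (n : ℝ) ^ (α * (2 * g n - g k - g (n - k))))|
      ≤ (K n : ℝ) * (1 + (n:ℝ)^β * D) := by
    calc |∑ k ∈ Finset.Ioc 0 j, (-1 + (n : ℝ) ^ (α * (2 * g n - g k - g (n - k))))|
        ≤ ∑ k ∈ Finset.Ioc 0 j, |(-1 + (n : ℝ) ^ (α * (2 * g n - g k - g (n - k))))| :=
          Finset.abs_sum_le_sum_abs _ _
      _ ≤ (Finset.Ioc 0 j).card • (1 + (n:ℝ)^β * D) :=
          Finset.sum_le_card_nsmul _ _ _ hsmall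
      _ = (j : ℝ) * (1 + (n:ℝ)^β * D) := by
          rw [Nat.card_Ioc, nsmul_eq_mul]; norm_num
      _ ≤ (K n : ℝ) * (1 + (n:ℝ)^β * D) := by
          have hjK : (j:ℝ) ≤ (K n : ℝ) := by
            have : j ≤ K n := by omega
            exact_mod_cast this
          have h9 : (0:ℝ) ≤ 1 + (n:ℝ)^β * D :=
            le_add_of_nonneg_right (mul_nonneg (Real.rpow_nonneg hn0.le _) hD0.le) |>.trans (by linarith [mul_nonneg (Real.rpow_nonneg hn0.le β) hD0.le])
          exact mul_le_mul_of_nonneg_right hjK h9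
  have hA2 : |∑ k ∈ Finset.Ioc j N, (-1 + (n : ℝ) ^ (α * (2 * g n - g k - g (n - k))))|
      ≤ ((n:ℝ)/2) * E := by
    calc |∑ k ∈ Finset.Ioc j N, (-1 + (n : ℝ) ^ (α * (2 * g n - g k - g (n - k))))|
        ≤ ∑ k ∈ Finset.Ioc j N, |(-1 + (n : ℝ) ^ (α * (2 * g n - g k - g (n - k))))| :=
          Finset.abs_sum_le_sum_abs _ _
      _ ≤ (Finset.Ioc j N).card • E := Finset.sum_le_card_nsmul _ _ _ hlarge
      _ = ((N - j : ℕ) : ℝ) * E := by rw [Nat.card_Ioc, nsmul_eq_mul]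
      _ ≤ ((n:ℝ)/2) * E := by
          apply mul_le_mul_of_nonneg_right _ hE0
          calc ((N - j : ℕ) : ℝ) ≤ (N : ℝ) := by exact_mod_cast Nat.sub_le _ _
            _ ≤ (n:ℝ)/2 := by
                have := Nat.cast_div_le (α := ℝ) (m := n) (n := 2)
                rw [hN_def]
                simpa using this
  have habs_add := abs_add_le
    (∑ k ∈ Finset.Ioc 0 j, (-1 + (n : ℝ) ^ (α * (2 * g n - g k - g (n - k)))))
    (∑ k ∈ Finset.Ioc j N, (-1 + (n : ℝ) ^ (α * (2 * g n - g k - g (n - k)))))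
  have hfin : (2 / (n:ℝ)) * ((K n : ℝ) * (1 + (n:ℝ)^β * D) + ((n:ℝ)/2) * E)
      = 2 * ((K n : ℝ) / n) + 2 * ((K n : ℝ) * (n:ℝ)^(β-1)) * D + E := by
    have h2 : (n:ℝ)^(β-1) = (n:ℝ)^β / n := by
      rw [Real.rpow_sub hn0, Real.rpow_one]
    rw [h2]
    field_simp
  have hsum := habs_add.trans (add_le_add hA1 hA2)
  simp only [hB_def]
  rw [← hD_def, ← hE_def, ← hfin]
  exact mul_le_mul_of_nonneg_left hsum (by positivity)
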